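/- arXiv:1409.6134 — 2 statements merged into one kernel-verified Lean document; each statement's English description precedes it below -/
import Mathlib

section
/- Let (X,μ) be a standard probability space and ρ a measurable semimetric on (X,μ). Then ρ is admissible (i.e., separable on some subset of full measure) if and only if ℍ_ε(X,μ,ρ) < +∞ for every ε > 0. -/
open MeasureTheory Filter Set
open scoped ENNReal

/-- A semimetric on a set: symmetric, nonnegative, vanishing on the diagonal,
satisfying the triangle inequality. -/
structure IsSemimetric {Y : Type*} (ρ : Y → Y → ℝ) : Prop where
  refl : ∀ x, ρ x x = 0
  symm : ∀ x y, ρ x y = ρ y x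
  nonneg : ∀ x y, 0 ≤ ρ x y
  triangle : ∀ x y z, ρ x z ≤ ρ x y + ρ y z

/-- `ρ` is separable on the set `s`: some countable subset of `s` is `ρ`-dense in `s`. -/
def SeparableWRT {Y : Type*} (ρ : Y → Y → ℝ) (s : Set Y) : Prop :=
  ∃ D : Set Y, D.Countable ∧ D ⊆ s ∧ ∀ x ∈ s, ∀ ε : ℝ, 0 < ε → ∃ y ∈ D, ρ x y < ε

variable {X : Type*} [MeasurableSpace X]

/-- A semimetric is admissible if it is separable on a measurable subset of full measure. -/
def IsAdmissible (μ : Measure X) (ρ : X → X → ℝ) : Prop :=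
  ∃ s : Set X, MeasurableSet s ∧ μ sᶜ = 0 ∧ SeparableWRT ρ s

/-- There is a partition `X₀, X₁, …, X_k` of `X` into measurable pieces with `μ X₀ < ε`
and the `ρ`-diameter of `X_j` (1 ≤ j ≤ k) less than `ε`. -/
def IsEntropyPartition (μ : Measure X) (ρ : X → X → ℝ) (ε : ℝ) (k : ℕ) : Prop :=
  ∃ P : Fin (k + 1) → Set X,
    (∀ j, MeasurableSet (P j)) ∧
    Pairwise (fun i j => Disjoint (P i) (P j)) ∧
    (⋃ j, P j) = Set.univ ∧
    μ (P 0) < ENNReal.ofReal ε ∧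
    ∀ j, j ≠ 0 → ∀ x ∈ P j, ∀ y ∈ P j, ρ x y < ε

open scoped Classical in
/-- The Kolmogorov ε-entropy `ℍ_ε(X, μ, ρ)` of a semimetric triple: `log₂ k` for the least
`k` admitting an entropy partition, and `∞` if there is none. -/
noncomputable def epsEntropy (μ : Measure X) (ρ : X → X → ℝ) (ε : ℝ) : ℝ≥0∞ :=
  if h : ∃ k, IsEntropyPartition μ ρ ε k
  then ENNReal.ofReal (Real.logb 2 (Nat.find h))
  else ⊤

/-- The shift `T^k ρ` of a semimetric by the `k`-th power (k ∈ ℤ) of an automorphism. -/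
def shiftSemimetric (T : Equiv.Perm X) (k : ℤ) (ρ : X → X → ℝ) : X → X → ℝ :=
  fun x y => ρ ((T ^ k) x) ((T ^ k) y)

/-- The average `T^n_av ρ = (1/n) ∑_{k=0}^{n-1} T^k ρ`. -/
noncomputable def avgSemimetric (T : Equiv.Perm X) (ρ : X → X → ℝ) (n : ℕ) : X → X → ℝ :=
  fun x y => (∑ k ∈ Finset.range n, ρ ((T ^ k) x) ((T ^ k) y)) / n

/-- `h` is a scaling sequence for the semimetric `ρ` w.r.t. the automorphism `T`:
`h` is positive, for every `ε > 0` the sequence `ℍ_ε(X, μ, T^n_av ρ)/h_n` has finite limsup,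
and for all sufficiently small `ε > 0` it has positive liminf. Sequences are indexed by
`n = 1, 2, …`. -/
def IsScalingSeq (μ : Measure X) (T : Equiv.Perm X) (ρ : X → X → ℝ) (h : ℕ → ℝ) : Prop :=
  (∀ n, 1 ≤ n → 0 < h n) ∧
  (∀ ε : ℝ, 0 < ε →
    Filter.limsup (fun n : ℕ =>
      epsEntropy μ (avgSemimetric T ρ n) ε / ENNReal.ofReal (h n)) Filter.atTop < ⊤) ∧
  (∃ ε₀ : ℝ, 0 < ε₀ ∧ ∀ ε : ℝ, 0 < ε → ε < ε₀ →
    0 < Filter.liminf (fun n : ℕ =>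
      epsEntropy μ (avgSemimetric T ρ n) ε / ENNReal.ofReal (h n)) Filter.atTop)

/-- `ρ` is (two-sided) generating for `(X, μ, T)`: the shifts `T^k ρ`, `k ∈ ℤ`, separate points
of a subset of full measure. -/
def IsGenerating (μ : Measure X) (T : Equiv.Perm X) (ρ : X → X → ℝ) : Prop :=
  ∃ s : Set X, MeasurableSet s ∧ μ sᶜ = 0 ∧
    ∀ x ∈ s, ∀ y ∈ s, x ≠ y → ∃ k : ℤ, 0 < ρ ((T ^ k) x) ((T ^ k) y)

/-- `h` is a scaling entropy sequence of the system `(X, μ, T)`: it is a scaling sequence for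
some summable admissible measurable generating semimetric. -/
def IsScalingEntropySeq (μ : Measure X) (T : Equiv.Perm X) (h : ℕ → ℝ) : Prop :=
  ∃ ρ : X → X → ℝ, IsSemimetric ρ ∧
    Measurable (fun p : X × X => ρ p.1 p.2) ∧
    MeasureTheory.Integrable (fun p : X × X => ρ p.1 p.2) (μ.prod μ) ∧
    IsAdmissible μ ρ ∧ IsGenerating μ T ρ ∧ IsScalingSeq μ T ρ h

/-- The (Shannon) entropy, base 2, of the countable partition of `X` into the fibers of `f`. -/
noncomputable def partitionEntropy {ι : Type*} [Countable ι] (μ : Measure X) (f : X → ι) :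
    ℝ≥0∞ :=
  ∑' i : ι, ENNReal.ofReal (-((μ (f ⁻¹' {i})).toReal * Real.logb 2 (μ (f ⁻¹' {i})).toReal))

/-- The Kolmogorov (measure-theoretic) entropy of the automorphism `T`: the supremum over all
finite measurable partitions `ξ` of `lim_n H(ξ ∨ T⁻¹ξ ∨ ⋯ ∨ T^{-(n-1)}ξ)/n`. -/
noncomputable def kolmogorovEntropy (μ : Measure X) (T : Equiv.Perm X) : ℝ≥0∞ :=
  ⨆ (m : ℕ) (ξ : X → Fin m) (_ : ∀ i, MeasurableSet (ξ ⁻¹' {i})),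
    Filter.limsup (fun n : ℕ =>
      partitionEntropy μ (fun x => fun i : Fin n => ξ ((T ^ (-(i : ℤ))) x)) / (n : ℝ≥0∞))
      Filter.atTop

/-- The Kushnirenko `A`-entropy of `T` along the sequence `A = {a_n}`: the supremum over all
countable measurable partitions `ξ` of finite entropy of
`limsup_n H(T^{a_1}ξ ∨ ⋯ ∨ T^{a_n}ξ)/n`. -/
noncomputable def kushnirenkoEntropy (μ : Measure X) (T : Equiv.Perm X) (a : ℕ → ℕ) : ℝ≥0∞ :=
  ⨆ (ξ : X → ℕ) (_ : ∀ i, MeasurableSet (ξ ⁻¹' {i})) (_ : partitionEntropy μ ξ < ⊤),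
    Filter.limsup (fun n : ℕ =>
      partitionEntropy μ (fun x => fun i : Fin n => ξ ((T ^ (a i)) x)) / (n : ℝ≥0∞))
      Filter.atTop

/-- The Koopman operator `f ↦ f ∘ T` on `L²(X, μ)` has purely point spectrum: `L²(X, μ)`
possesses an orthonormal (Hilbert) basis consisting of eigenfunctions of `f ↦ f ∘ T`. -/
def HasPurePointSpectrum (μ : Measure X) (T : X → X) : Prop :=
  ∃ (ι : Type) (b : HilbertBasis ι ℂ (MeasureTheory.Lp ℂ 2 μ)),
    ∀ i : ι, ∃ c : ℂ, (fun x => (b i : MeasureTheory.Lp ℂ 2 μ) (T x))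
      =ᵐ[μ] fun x => c * (b i : MeasureTheory.Lp ℂ 2 μ) x

section Aux
variable {X : Type*} [MeasurableSpace X]

lemma nonempty_of_compl_null (μ : Measure X) [IsProbabilityMeasure μ] {s : Set X}
    (hs : μ sᶜ = 0) : s.Nonempty := by
  rw [Set.nonempty_iff_ne_empty]
  rintro rfl
  simp at hs

lemma exists_entropy_partition_of_admissible (μ : Measure X) [IsProbabilityMeasure μ]
    (ρ : X → X → ℝ) (hρ : IsSemimetric ρ)
    (hρmeas : Measurable fun p : X × X => ρ p.1 p.2)
    (h : IsAdmissible μ ρ) {ε : ℝ} (hε : 0 < ε) :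
    ∃ k, IsEntropyPartition μ ρ ε k := by
  obtain ⟨s, hsm, hsc, D, hDc, hDs, hdense⟩ := h
  obtain ⟨x₀, hx₀⟩ := nonempty_of_compl_null μ hsc
  have hDne : D.Nonempty := by
    obtain ⟨y, hy, -⟩ := hdense x₀ hx₀ 1 one_pos
    exact ⟨y, hy⟩
  obtain ⟨f, hf⟩ := Set.Countable.exists_eq_range hDc hDne
  -- balls
  set B : ℕ → Set X := fun i => {x | ρ x (f i) < ε / 2} with hB
  have hBmeas : ∀ i, MeasurableSet (B i) := by
    intro i
    have : Measurable fun x => ρ x (f i) :=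
      hρmeas.comp (measurable_id.prodMk measurable_const)
    exact this measurableSet_Iio
  set U : ℕ → Set X := fun n => ⋃ i < n, B i with hU
  have hUmeas : ∀ n, MeasurableSet (U n) := fun n =>
    MeasurableSet.biUnion (Set.to_countable _) fun i _ => hBmeas i
  have hUmono : Monotone U := by
    intro a b hab
    exact Set.biUnion_subset_biUnion_left fun i hi => lt_of_lt_of_le hi hab
  have hsU : s ⊆ ⋃ n, U n := by
    intro x hx
    obtain ⟨y, hyD, hxy⟩ := hdense x hx (ε / 2) (half_pos hε)
    obtain ⟨i, rfl⟩ : ∃ i, f i = y := by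
      rw [hf] at hyD; exact hyD
    exact Set.mem_iUnion.2 ⟨i + 1, Set.mem_biUnion (Nat.lt_succ_self i) hxy⟩
  have hUfull : μ (⋃ n, U n) = 1 := by
    refine le_antisymm prob_le_one ?_
    calc (1 : ℝ≥0∞) = μ Set.univ := (measure_univ).symm
      _ ≤ μ ((⋃ n, U n) ∪ sᶜ) := by
          refine measure_mono fun x _ => ?_
          by_cases hx : x ∈ s
          · exact Or.inl (hsU hx)
          · exact Or.inr hx
      _ ≤ μ (⋃ n, U n) + μ sᶜ := measure_union_le _ _
      _ = μ (⋃ n, U n) := by rw [hsc, add_zero]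
  -- find n with big measure
  have htend : Filter.Tendsto (fun n => μ (U n)) Filter.atTop (nhds 1) := by
    have := tendsto_measure_iUnion_atTop (μ := μ) hUmono
    rwa [hUfull] at this
  have hlt1 : (1 : ℝ≥0∞) - ENNReal.ofReal ε < 1 :=
    ENNReal.sub_lt_self ENNReal.one_ne_top one_ne_zero (ENNReal.ofReal_pos.2 hε).ne'
  obtain ⟨n, hn⟩ := (htend.eventually (eventually_gt_nhds hlt1)).exists
  -- disjointify
  set Q : ℕ → Set X := fun j => B j \ ⋃ i < j, B i with hQ
  refine ⟨n, Fin.cons (U n)ᶜ (fun j : Fin n => Q j), ?_, ?_, ?_, ?_, ?_⟩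
  · intro j
    refine Fin.cases ?_ (fun j => ?_) j
    · exact (hUmeas n).compl
    · exact (hBmeas j).diff (MeasurableSet.biUnion (Set.to_countable _) fun i _ => hBmeas i)
  · have key : ∀ (i j : Fin n), (i : ℕ) < (j : ℕ) → Disjoint (Q i) (Q j) := by
      intro i j hij
      refine Set.disjoint_left.2 fun x hxi hxj => ?_
      exact hxj.2 (Set.mem_biUnion hij hxi.1)
    have keyQU : ∀ j : Fin n, Q j ⊆ U n := by
      intro j x hx
      exact Set.mem_biUnion j.2 hx.1
    intro i j hij
    induction i using Fin.cases with
    | zero =>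
      induction j using Fin.cases with
      | zero => exact absurd rfl hij
      | succ j' =>
        simp only [Fin.cons_zero, Fin.cons_succ]
        exact Set.disjoint_left.2 fun x hx hx' => hx (keyQU j' hx')
    | succ i' =>
      induction j using Fin.cases with
      | zero =>
        simp only [Fin.cons_zero, Fin.cons_succ]
        exact Set.disjoint_left.2 fun x hx hx' => hx' (keyQU i' hx)
      | succ j' =>
        simp only [Fin.cons_succ]
        have hne' : (i' : ℕ) ≠ (j' : ℕ) := by
          intro hval
          exact hij (by simp [Fin.ext_iff, hval])
        rcases hne'.lt_or_gt with h' | h'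
        · exact key i' j' h'
        · exact (key j' i' h').symm
  · refine Set.eq_univ_of_forall fun x => Set.mem_iUnion.2 ?_
    by_cases hx : x ∈ U n
    · have hex : ∃ i, i < n ∧ x ∈ B i := by
        simpa [hU, Set.mem_iUnion] using hx
      classical
      have hex' : ∃ i, x ∈ B i := ⟨hex.choose, hex.choose_spec.2⟩
      set i₀ := Nat.find hex' with hi₀
      have hi₀B : x ∈ B i₀ := Nat.find_spec hex'
      have hi₀lt : i₀ < n := by
        obtain ⟨i, hin, hiB⟩ := hex
        exact lt_of_le_of_lt (Nat.find_le hiB) hin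
      refine ⟨(⟨i₀, hi₀lt⟩ : Fin n).succ, ?_⟩
      rw [Fin.cons_succ]
      refine ⟨hi₀B, ?_⟩
      intro hmem
      obtain ⟨i, hii₀, hiB⟩ : ∃ i, i < i₀ ∧ x ∈ B i := by
        simpa [Set.mem_iUnion] using hmem
      exact Nat.find_min hex' hii₀ hiB
    · exact ⟨0, hx⟩
  · rw [Fin.cons_zero]
    by_contra hge
    push_neg at hge
    have h1 : μ (U n) + ENNReal.ofReal ε ≤ 1 := by
      calc μ (U n) + ENNReal.ofReal ε ≤ μ (U n) + μ (U n)ᶜ := add_le_add le_rfl hge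
        _ = 1 := prob_add_prob_compl (hUmeas n)
    exact absurd hn (not_lt.2 (ENNReal.le_sub_of_add_le_right ENNReal.ofReal_ne_top h1))
  · intro j hj x hx y hy
    induction j using Fin.cases with
    | zero => exact absurd rfl hj
    | succ j' =>
      rw [Fin.cons_succ] at hx hy
      calc ρ x y ≤ ρ x (f j') + ρ (f j') y := hρ.triangle _ _ _
        _ = ρ x (f j') + ρ y (f j') := by rw [hρ.symm (f j') y]
        _ < ε / 2 + ε / 2 := add_lt_add hx.1 hy.1
        _ = ε := add_halves ε

lemma isAdmissible_of_partitions (μ : Measure X) [IsProbabilityMeasure μ]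
    (ρ : X → X → ℝ)
    (h : ∀ n : ℕ, ∃ k, IsEntropyPartition μ ρ ((1 / 2 : ℝ) ^ n) k) :
    IsAdmissible μ ρ := by
  classical
  choose k hk using h
  simp only [IsEntropyPartition] at hk
  choose P hmeas hdisj hcover h0 hdiam using hk
  set G : ℕ → Set X := fun n => (P n 0)ᶜ with hG
  set s : Set X := ⋂ N : ℕ, ⋃ n, ⋃ (_ : N ≤ n), G n with hs
  have hsmeas : MeasurableSet s :=
    MeasurableSet.iInter fun N => MeasurableSet.iUnion fun n =>
      MeasurableSet.iUnion fun _ => (hmeas n 0).compl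
  have hscnull : μ sᶜ = 0 := by
    have hcompl : sᶜ = ⋃ N : ℕ, ⋂ n, ⋂ (_ : N ≤ n), P n 0 := by
      rw [hs, Set.compl_iInter]
      refine Set.iUnion_congr fun N => ?_
      rw [Set.compl_iUnion]
      refine Set.iInter_congr fun n => ?_
      rw [Set.compl_iUnion]
      simp [hG]
    rw [hcompl]
    refine measure_iUnion_null fun N => ?_
    refine le_antisymm ?_ zero_le
    have hle : ∀ m : ℕ, μ (⋂ n, ⋂ (_ : N ≤ n), P n 0) ≤
        ENNReal.ofReal ((1 / 2 : ℝ) ^ (N + m)) := by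
      intro m
      refine le_trans (measure_mono ?_) (h0 (N + m)).le
      exact Set.iInter₂_subset (N + m) (Nat.le_add_right N m)
    have htend : Filter.Tendsto (fun m : ℕ => ENNReal.ofReal ((1 / 2 : ℝ) ^ (N + m)))
        Filter.atTop (nhds 0) := by
      rw [← ENNReal.ofReal_zero]
      refine ENNReal.tendsto_ofReal ?_
      have h2 : Filter.Tendsto (fun m : ℕ => ((1 : ℝ) / 2) ^ m) Filter.atTop (nhds 0) :=
        tendsto_pow_atTop_nhds_zero_of_lt_one (by norm_num) (by norm_num)
      have h3 := h2.comp (Filter.tendsto_add_atTop_nat N)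
      simpa [Function.comp_def, add_comm] using h3
    exact le_of_tendsto_of_tendsto' tendsto_const_nhds htend hle
  obtain ⟨x₀, hx₀⟩ := nonempty_of_compl_null μ hscnull
  let rep : (n : ℕ) → Fin (k n + 1) → X := fun n j =>
    if h : (P n j ∩ s).Nonempty then h.some else x₀
  have hrep : ∀ n j, (P n j ∩ s).Nonempty → rep n j ∈ P n j ∩ s := by
    intro n j hne
    simp only [rep, dif_pos hne]
    exact hne.some_mem
  have hrep_s : ∀ n j, rep n j ∈ s := by
    intro n j
    by_cases hne : (P n j ∩ s).Nonempty
    · exact (hrep n j hne).2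
    · simp only [rep, dif_neg hne]; exact hx₀
  refine ⟨s, hsmeas, hscnull, ⋃ n : ℕ, Set.range (rep n), ?_, ?_, ?_⟩
  · exact Set.countable_iUnion fun n => (Set.finite_range (rep n)).countable
  · exact Set.iUnion_subset fun n => Set.range_subset_iff.2 fun j => hrep_s n j
  · intro x hx ε hε
    obtain ⟨N, hN⟩ := exists_pow_lt_of_lt_one hε (show (1 : ℝ) / 2 < 1 by norm_num)
    have hxN := Set.mem_iInter.1 hx N
    obtain ⟨n, hn⟩ := Set.mem_iUnion.1 hxN
    obtain ⟨hNn, hxG⟩ := Set.mem_iUnion.1 hn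
    have hxcov : x ∈ ⋃ j, P n j := (hcover n).symm ▸ Set.mem_univ x
    obtain ⟨j, hxj⟩ := Set.mem_iUnion.1 hxcov
    have hj0 : j ≠ 0 := by rintro rfl; exact hxG hxj
    have hne : (P n j ∩ s).Nonempty := ⟨x, hxj, hx⟩
    refine ⟨rep n j, Set.mem_iUnion.2 ⟨n, Set.mem_range_self j⟩, ?_⟩
    calc ρ x (rep n j) < (1 / 2 : ℝ) ^ n := hdiam n j hj0 x hxj (rep n j) (hrep n j hne).1
      _ ≤ (1 / 2 : ℝ) ^ N := pow_le_pow_of_le_one (by norm_num) (by norm_num) hNn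
      _ < ε := hN

end Aux

/-- A measurable semimetric `ρ` on a standard probability space `(X, μ)` is
admissible if and only if `ℍ_ε(X, μ, ρ) < ∞` for every `ε > 0`. -/
theorem isAdmissible_iff_epsEntropy_lt_top
    {X : Type*} [MeasurableSpace X] [StandardBorelSpace X]
    (μ : Measure X) [IsProbabilityMeasure μ]
    (ρ : X → X → ℝ) (hρ : IsSemimetric ρ)
    (hρmeas : Measurable fun p : X × X => ρ p.1 p.2) :
    IsAdmissible μ ρ ↔ ∀ ε : ℝ, 0 < ε → epsEntropy μ ρ ε < ⊤ := by
  constructor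
  · intro ha ε hε
    rw [epsEntropy, dif_pos (exists_entropy_partition_of_admissible μ ρ hρ hρmeas ha hε)]
    exact ENNReal.ofReal_lt_top
  · intro h
    refine isAdmissible_of_partitions μ ρ fun n => ?_
    have hp : (0 : ℝ) < (1 / 2) ^ n := by positivity
    have h2 := h ((1 / 2) ^ n) hp
    by_contra hc
    rw [epsEntropy, dif_neg hc] at h2
    exact absurd h2 (lt_irrefl ⊤)
end

section
/- The class of scaling entropy sequences is a metric invariant of ergodic dynamical systems: if (X₁,μ₁,T₁) and (X₂,μ₂,T₂) are ergodic metric dynamical systems that are measure-theoretically isomorphic (i.e., there is a measure-preserving bijection mod zero φ: X₁ → X₂ with φ∘T₁ = T₂∘φ almost everywhere), then ℋ(X₁,μ₁,T₁) = ℋ(X₂,μ₂,T₂). -/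
open MeasureTheory Filter Set
open scoped ENNReal

variable {X : Type*} [MeasurableSpace X]

set_option linter.unusedSectionVars false

section AuxZpow

variable {α : Type*} {β : Type*}

lemma perm_zpow_add_one (T : Equiv.Perm α) (k : ℤ) (x : α) :
    (T ^ (k + 1)) x = T ((T ^ k) x) := by
  rw [add_comm, zpow_add, zpow_one, Equiv.Perm.mul_apply]

lemma perm_zpow_sub_one (T : Equiv.Perm α) (k : ℤ) (x : α) :
    (T ^ (k - 1)) x = T.symm ((T ^ k) x) := by
  have h : T ((T ^ (k - 1)) x) = (T ^ k) x := by
    rw [← perm_zpow_add_one, sub_add_cancel]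
  rw [← h, Equiv.symm_apply_apply]

lemma measurable_perm_zpow [MeasurableSpace α] (T : Equiv.Perm α) (hT : Measurable ⇑T)
    (hTs : Measurable ⇑T.symm) : ∀ k : ℤ, Measurable ⇑(T ^ k) := by
  intro k
  induction k using Int.induction_on with
  | zero => simpa using measurable_id
  | succ n ih =>
      have h : ⇑(T ^ ((n : ℤ) + 1)) = ⇑T ∘ ⇑(T ^ (n : ℤ)) :=
        funext fun x => perm_zpow_add_one T n x
      rw [h]; exact hT.comp ih
  | pred n ih =>
      have h : ⇑(T ^ (-(n : ℤ) - 1)) = ⇑T.symm ∘ ⇑(T ^ (-(n : ℤ))) :=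
        funext fun x => perm_zpow_sub_one T (-(n : ℤ)) x
      rw [h]; exact hTs.comp ih

lemma measurePreserving_perm_zpow [MeasurableSpace α] {μ : Measure α} (T : Equiv.Perm α) (hT : Measurable ⇑T)
    (hTs : Measurable ⇑T.symm) (hp : MeasurePreserving ⇑T μ μ) :
    ∀ k : ℤ, MeasurePreserving ⇑(T ^ k) μ μ := by
  have hsymm : MeasurePreserving ⇑T.symm μ μ :=
    MeasurePreserving.symm (⟨T, hT, hTs⟩ : α ≃ᵐ α) hp
  intro k
  induction k using Int.induction_on with
  | zero => simpa using MeasurePreserving.id μ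
  | succ n ih =>
      have h : ⇑(T ^ ((n : ℤ) + 1)) = ⇑T ∘ ⇑(T ^ (n : ℤ)) :=
        funext fun x => perm_zpow_add_one T n x
      rw [h]; exact hp.comp ih
  | pred n ih =>
      have h : ⇑(T ^ (-(n : ℤ) - 1)) = ⇑T.symm ∘ ⇑(T ^ (-(n : ℤ))) :=
        funext fun x => perm_zpow_sub_one T (-(n : ℤ)) x
      rw [h]; exact hsymm.comp ih

lemma exists_good_set [MeasurableSpace α] {μ : Measure α} (T : Equiv.Perm α)
    (hTk : ∀ k : ℤ, Measurable ⇑(T ^ k))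
    (hTp : ∀ k : ℤ, MeasurePreserving ⇑(T ^ k) μ μ)
    {p : α → Prop} (hp : ∀ᵐ x ∂μ, p x) :
    ∃ G : Set α, MeasurableSet G ∧ μ Gᶜ = 0 ∧ ∀ x ∈ G, ∀ k : ℤ, p ((T ^ k) x) := by
  set N := toMeasurable μ {x | ¬ p x} with hN
  have hNm : MeasurableSet N := measurableSet_toMeasurable μ _
  have hN0 : μ N = 0 := by rw [hN, measure_toMeasurable]; exact ae_iff.mp hp
  refine ⟨⋂ k : ℤ, (T ^ k) ⁻¹' Nᶜ, MeasurableSet.iInter fun k => (hTk k) hNm.compl, ?_, ?_⟩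
  · rw [Set.compl_iInter]
    refine measure_iUnion_null fun k => ?_
    rw [← Set.preimage_compl, compl_compl, (hTp k).measure_preimage hNm.nullMeasurableSet]
    exact hN0
  · intro x hx k
    have h := Set.mem_iInter.mp hx k
    by_contra hc
    exact h (subset_toMeasurable μ _ hc)

lemma conj_zpow_of_forall (T : Equiv.Perm α) (S : Equiv.Perm β) (ψ : α → β) (y : α)
    (h : ∀ k : ℤ, ψ (T ((T ^ k) y)) = S (ψ ((T ^ k) y))) :
    ∀ k : ℤ, ψ ((T ^ k) y) = (S ^ k) (ψ y) := by
  intro k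
  induction k using Int.induction_on with
  | zero => simp
  | succ n ih => rw [perm_zpow_add_one, h n, ih, ← perm_zpow_add_one]
  | pred n ih =>
      have e1 : T ((T ^ (-(n : ℤ) - 1)) y) = (T ^ (-(n : ℤ))) y := by
        rw [← perm_zpow_add_one]; norm_num
      have h' := h (-(n : ℤ) - 1)
      rw [e1, ih] at h'
      have e2 : (S ^ (-(n : ℤ) - 1)) (ψ y) = S.symm ((S ^ (-(n : ℤ))) (ψ y)) :=
        perm_zpow_sub_one S (-(n : ℤ)) (ψ y)
      rw [e2, h', Equiv.symm_apply_apply]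

end AuxZpow

lemma epsEntropy_eq_of_iff {X : Type*} [MeasurableSpace X] {Y : Type*} [MeasurableSpace Y]
    {μ : Measure X} {ν : Measure Y} {σ : X → X → ℝ} {τ : Y → Y → ℝ} {ε : ℝ}
    (h : ∀ k, IsEntropyPartition μ σ ε k ↔ IsEntropyPartition ν τ ε k) :
    epsEntropy μ σ ε = epsEntropy ν τ ε := by
  classical
  unfold epsEntropy
  by_cases h1 : ∃ k, IsEntropyPartition μ σ ε k
  · have h2 : ∃ k, IsEntropyPartition ν τ ε k := (exists_congr h).mp h1
    rw [dif_pos h1, dif_pos h2]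
    have : Nat.find h1 = Nat.find h2 :=
      le_antisymm (Nat.find_min' h1 ((h _).mpr (Nat.find_spec h2)))
        (Nat.find_min' h2 ((h _).mp (Nat.find_spec h1)))
    rw [this]
  · have h2 : ¬ ∃ k, IsEntropyPartition ν τ ε k := fun h2 => h1 ((exists_congr h).mpr h2)
    rw [dif_neg h1, dif_neg h2]

lemma IsEntropyPartition.pullback {X : Type*} [MeasurableSpace X] {Y : Type*} [MeasurableSpace Y]
    {μ : Measure X} {ν : Measure Y} {f : X → Y} (hf : MeasurePreserving f μ ν)
    {σ : X → X → ℝ} {τ : Y → Y → ℝ} {G : Set X} (hG : MeasurableSet G) (hGc : μ Gᶜ = 0)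
    (hστ : ∀ x ∈ G, ∀ y ∈ G, σ x y = τ (f x) (f y)) {ε : ℝ} {k : ℕ}
    (h : IsEntropyPartition ν τ ε k) : IsEntropyPartition μ σ ε k := by
  classical
  obtain ⟨Q, hQm, hQd, hQu, hQ0, hQdiam⟩ := h
  refine ⟨fun j => if j = 0 then f ⁻¹' (Q 0) ∪ Gᶜ else f ⁻¹' (Q j) ∩ G, ?_, ?_, ?_, ?_, ?_⟩
  · intro j
    dsimp only
    by_cases hj : j = 0
    · rw [if_pos hj]; exact (hf.measurable (hQm 0)).union hG.compl
    · rw [if_neg hj]; exact (hf.measurable (hQm j)).inter hG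
  · intro i j hij
    rw [Set.disjoint_left]
    intro x hxi hxj
    dsimp only at hxi hxj
    rcases eq_or_ne i 0 with hi | hi <;> rcases eq_or_ne j 0 with hj | hj
    · exact hij (hi.trans hj.symm)
    · subst hi; rw [if_pos rfl] at hxi; rw [if_neg hj] at hxj
      rcases hxi with hxi | hxi
      · exact Set.disjoint_left.mp (hQd hij) hxi hxj.1
      · exact hxi hxj.2
    · subst hj; rw [if_neg hi] at hxi; rw [if_pos rfl] at hxj
      rcases hxj with hxj | hxj
      · exact Set.disjoint_left.mp (hQd hij) hxi.1 hxj
      · exact hxj hxi.2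
    · rw [if_neg hi] at hxi; rw [if_neg hj] at hxj
      exact Set.disjoint_left.mp (hQd hij) hxi.1 hxj.1
  · ext x
    simp only [Set.mem_iUnion, Set.mem_univ, iff_true]
    by_cases hxG : x ∈ G
    · have hx : f x ∈ ⋃ j, Q j := by rw [hQu]; trivial
      obtain ⟨j, hj⟩ := Set.mem_iUnion.mp hx
      rcases eq_or_ne j 0 with h0 | h0
      · exact ⟨0, by rw [if_pos rfl]; exact Or.inl (h0 ▸ hj)⟩
      · exact ⟨j, by rw [if_neg h0]; exact ⟨hj, hxG⟩⟩
    · exact ⟨0, by rw [if_pos rfl]; exact Or.inr hxG⟩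
  · dsimp only
    rw [if_pos rfl]
    calc μ (f ⁻¹' Q 0 ∪ Gᶜ) ≤ μ (f ⁻¹' Q 0) + μ Gᶜ := measure_union_le _ _
      _ = ν (Q 0) := by rw [hGc, add_zero, hf.measure_preimage (hQm 0).nullMeasurableSet]
      _ < ENNReal.ofReal ε := hQ0
  · intro j hj x hx y hy
    dsimp only at hx hy
    rw [if_neg hj] at hx hy
    rw [hστ x hx.2 y hy.2]
    exact hQdiam j hj _ hx.1 _ hy.1

lemma separable_pullback {X : Type*} {Y : Type*} {ρ : X → X → ℝ} (hρ : IsSemimetric ρ)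
    {s : Set X} (hsep : SeparableWRT ρ s) {ψ : Y → X} {t : Set Y} (ht : t ⊆ ψ ⁻¹' s) :
    SeparableWRT (fun a b => ρ (ψ a) (ψ b)) t := by
  classical
  obtain ⟨D, hDc, hDs, hDd⟩ := hsep
  set pick : X → ℕ → Set Y := fun d n =>
    if h : ∃ y ∈ t, ρ (ψ y) d < 1 / (n + 1) then {h.choose} else ∅ with hpick
  refine ⟨⋃ d ∈ D, ⋃ n : ℕ, pick d n, ?_, ?_, ?_⟩
  · exact hDc.biUnion fun d _ => Set.countable_iUnion fun n => by
      rw [hpick]; dsimp only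
      split
      · exact Set.countable_singleton _
      · exact Set.countable_empty
  · intro y hy
    simp only [Set.mem_iUnion] at hy
    obtain ⟨d, _, n, hyn⟩ := hy
    rw [hpick] at hyn; dsimp only at hyn
    split at hyn
    · next hex => rw [Set.mem_singleton_iff] at hyn; exact hyn ▸ hex.choose_spec.1
    · exact absurd hyn (Set.notMem_empty _)
  · intro x hx ε hε
    obtain ⟨n, hn⟩ := exists_nat_one_div_lt (half_pos hε)
    have hψx : ψ x ∈ s := ht hx
    obtain ⟨d, hd, hdlt⟩ := hDd (ψ x) hψx (1 / (n + 1)) (by positivity)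
    have hex : ∃ y ∈ t, ρ (ψ y) d < 1 / (n + 1) := ⟨x, hx, hdlt⟩
    refine ⟨hex.choose, ?_, ?_⟩
    · simp only [Set.mem_iUnion]
      exact ⟨d, hd, n, by rw [hpick]; dsimp only; rw [dif_pos hex]; rfl⟩
    · have h1 := hex.choose_spec.2
      calc ρ (ψ x) (ψ hex.choose) ≤ ρ (ψ x) d + ρ d (ψ hex.choose) := hρ.triangle _ _ _
        _ = ρ (ψ x) d + ρ (ψ hex.choose) d := by rw [hρ.symm d]
        _ < 1 / (n + 1) + 1 / (n + 1) := add_lt_add hdlt h1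
        _ < ε / 2 + ε / 2 := add_lt_add hn hn
        _ = ε := add_halves ε

lemma transfer_scalingEntropySeq {X₁ : Type*} [MeasurableSpace X₁]
    {X₂ : Type*} [MeasurableSpace X₂]
    (μ₁ : Measure X₁) [IsProbabilityMeasure μ₁] (μ₂ : Measure X₂) [IsProbabilityMeasure μ₂]
    (T₁ : Equiv.Perm X₁) (hT₁ : Measurable ⇑T₁) (hT₁s : Measurable ⇑T₁.symm)
    (hT₁p : MeasurePreserving ⇑T₁ μ₁ μ₁)
    (T₂ : Equiv.Perm X₂) (hT₂ : Measurable ⇑T₂) (hT₂s : Measurable ⇑T₂.symm)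
    (hT₂p : MeasurePreserving ⇑T₂ μ₂ μ₂)
    (φ : X₁ → X₂) (hφ : MeasurePreserving φ μ₁ μ₂)
    (ψ : X₂ → X₁) (hψ : MeasurePreserving ψ μ₂ μ₁)
    (hψφ : ∀ᵐ x ∂μ₁, ψ (φ x) = x) (hφψ : ∀ᵐ y ∂μ₂, φ (ψ y) = y)
    (hconj₁ : ∀ᵐ x ∂μ₁, φ (T₁ x) = T₂ (φ x))
    (hconj₂ : ∀ᵐ y ∂μ₂, ψ (T₂ y) = T₁ (ψ y))
    {h : ℕ → ℝ} (hh : IsScalingEntropySeq μ₁ T₁ h) :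
    IsScalingEntropySeq μ₂ T₂ h := by
  classical
  obtain ⟨ρ, hρsemi, hρmeas, hρint, hρadm, hρgen, hρscal⟩ := hh
  have hT₁k := measurable_perm_zpow T₁ hT₁ hT₁s
  have hT₂k := measurable_perm_zpow T₂ hT₂ hT₂s
  have hT₁kp := measurePreserving_perm_zpow T₁ hT₁ hT₁s hT₁p
  have hT₂kp := measurePreserving_perm_zpow T₂ hT₂ hT₂s hT₂p
  -- good sets
  obtain ⟨G₂, hG₂m, hG₂0, hG₂⟩ := exists_good_set T₂ hT₂k hT₂kp hconj₂
  have hG₂key : ∀ y ∈ G₂, ∀ k : ℤ, ψ ((T₂ ^ k) y) = (T₁ ^ k) (ψ y) := fun y hy =>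
    conj_zpow_of_forall T₂ T₁ ψ y (fun k => hG₂ y hy k)
  obtain ⟨G₁, hG₁m, hG₁0, hG₁⟩ := exists_good_set T₁ hT₁k hT₁kp (hψφ.and hconj₁)
  have hG₁conj : ∀ x ∈ G₁, ∀ k : ℤ, φ ((T₁ ^ k) x) = (T₂ ^ k) (φ x) := fun x hx =>
    conj_zpow_of_forall T₁ T₂ φ x (fun k => (hG₁ x hx k).2)
  have hG₁key : ∀ x ∈ G₁, ∀ k : ℤ, ψ ((T₂ ^ k) (φ x)) = (T₁ ^ k) x := fun x hx k => by
    rw [← hG₁conj x hx k]; exact (hG₁ x hx k).1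
  -- the transported semimetric
  refine ⟨fun a b => ρ (ψ a) (ψ b), ?_, ?_, ?_, ?_, ?_, ?_⟩
  · exact ⟨fun x => hρsemi.refl _, fun x y => hρsemi.symm _ _, fun x y => hρsemi.nonneg _ _,
      fun x y z => hρsemi.triangle _ _ _⟩
  · exact hρmeas.comp ((hψ.measurable.comp measurable_fst).prodMk
      (hψ.measurable.comp measurable_snd))
  · exact ((hψ.prod hψ).integrable_comp hρint.aestronglyMeasurable).mpr hρint
  · obtain ⟨s, hsm, hs0, hssep⟩ := hρadm
    refine ⟨ψ ⁻¹' s, hψ.measurable hsm, ?_, ?_⟩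
    · rw [← Set.preimage_compl, hψ.measure_preimage hsm.compl.nullMeasurableSet]
      exact hs0
    · exact separable_pullback hρsemi hssep (subset_refl _)
  · obtain ⟨s, hsm, hs0, hsep⟩ := hρgen
    set M := toMeasurable μ₂ {y | ¬ φ (ψ y) = y} with hM
    have hMm : MeasurableSet M := measurableSet_toMeasurable μ₂ _
    have hM0 : μ₂ M = 0 := by rw [hM, measure_toMeasurable]; exact ae_iff.mp hφψ
    refine ⟨ψ ⁻¹' s ∩ G₂ ∩ Mᶜ, ((hψ.measurable hsm).inter hG₂m).inter hMm.compl, ?_, ?_⟩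
    · rw [Set.compl_inter, Set.compl_inter, compl_compl]
      refine measure_union_null (measure_union_null ?_ hG₂0) hM0
      rw [← Set.preimage_compl, hψ.measure_preimage hsm.compl.nullMeasurableSet]
      exact hs0
    · intro x hx y hy hxy
      have hinjx : φ (ψ x) = x := by
        by_contra hc; exact hx.2 (subset_toMeasurable μ₂ _ hc)
      have hinjy : φ (ψ y) = y := by
        by_contra hc; exact hy.2 (subset_toMeasurable μ₂ _ hc)
      have hne : ψ x ≠ ψ y := fun e => hxy (by rw [← hinjx, ← hinjy, e])
      obtain ⟨k, hk⟩ := hsep (ψ x) hx.1.1 (ψ y) hy.1.1 hne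
      refine ⟨k, ?_⟩
      show 0 < ρ (ψ ((T₂ ^ k) x)) (ψ ((T₂ ^ k) y))
      rw [hG₂key x hx.1.2 k, hG₂key y hy.1.2 k]
      exact hk
  · -- scaling sequence
    have havg₂ : ∀ n : ℕ, ∀ x ∈ G₂, ∀ y ∈ G₂,
        avgSemimetric T₂ (fun a b => ρ (ψ a) (ψ b)) n x y
          = avgSemimetric T₁ ρ n (ψ x) (ψ y) := by
      intro n x hx y hy
      unfold avgSemimetric
      congr 1
      refine Finset.sum_congr rfl fun k _ => ?_
      have ex := hG₂key x hx (k : ℤ)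
      have ey := hG₂key y hy (k : ℤ)
      rw [zpow_natCast] at ex ey
      dsimp only
      rw [ex, ey, zpow_natCast]
    have havg₁ : ∀ n : ℕ, ∀ x ∈ G₁, ∀ y ∈ G₁,
        avgSemimetric T₁ ρ n x y
          = avgSemimetric T₂ (fun a b => ρ (ψ a) (ψ b)) n (φ x) (φ y) := by
      intro n x hx y hy
      unfold avgSemimetric
      congr 1
      refine Finset.sum_congr rfl fun k _ => ?_
      have ex := hG₁key x hx (k : ℤ)
      have ey := hG₁key y hy (k : ℤ)
      rw [zpow_natCast] at ex ey
      dsimp only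
      rw [ex, ey, zpow_natCast]
    have hEnt : ∀ (ε : ℝ) (n : ℕ),
        epsEntropy μ₂ (avgSemimetric T₂ (fun a b => ρ (ψ a) (ψ b)) n) ε
          = epsEntropy μ₁ (avgSemimetric T₁ ρ n) ε := by
      intro ε n
      refine epsEntropy_eq_of_iff fun k => ⟨?_, ?_⟩
      · intro h2
        exact IsEntropyPartition.pullback hφ hG₁m hG₁0 (fun x hx y hy => havg₁ n x hx y hy) h2
      · intro h1
        exact IsEntropyPartition.pullback hψ hG₂m hG₂0 (fun x hx y hy => havg₂ n x hx y hy) h1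
    obtain ⟨hpos, hsup, hinf⟩ := hρscal
    refine ⟨hpos, ?_, ?_⟩
    · intro ε hε
      have he : (fun n : ℕ =>
          epsEntropy μ₂ (avgSemimetric T₂ (fun a b => ρ (ψ a) (ψ b)) n) ε
            / ENNReal.ofReal (h n))
          = fun n : ℕ => epsEntropy μ₁ (avgSemimetric T₁ ρ n) ε / ENNReal.ofReal (h n) :=
        funext fun n => by rw [hEnt ε n]
      rw [he]
      exact hsup ε hε
    · obtain ⟨ε₀, hε₀, hliminf⟩ := hinf
      refine ⟨ε₀, hε₀, fun ε hε hε' => ?_⟩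
      have he : (fun n : ℕ =>
          epsEntropy μ₂ (avgSemimetric T₂ (fun a b => ρ (ψ a) (ψ b)) n) ε
            / ENNReal.ofReal (h n))
          = fun n : ℕ => epsEntropy μ₁ (avgSemimetric T₁ ρ n) ε / ENNReal.ofReal (h n) :=
        funext fun n => by rw [hEnt ε n]
      rw [he]
      exact hliminf ε hε hε'

/-- The class of scaling entropy sequences is a metric invariant: isomorphic
ergodic systems have equal classes `ℋ(X₁,μ₁,T₁) = ℋ(X₂,μ₂,T₂)`. -/
theorem scalingEntropySeq_class_eq_of_iso
    {X₁ : Type*} [MeasurableSpace X₁] [StandardBorelSpace X₁]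
    {X₂ : Type*} [MeasurableSpace X₂] [StandardBorelSpace X₂]
    (μ₁ : Measure X₁) [IsProbabilityMeasure μ₁]
    (μ₂ : Measure X₂) [IsProbabilityMeasure μ₂]
    (T₁ : Equiv.Perm X₁) (hT₁ : Measurable (⇑T₁)) (hT₁symm : Measurable (⇑T₁.symm))
    (hT₁erg : Ergodic (⇑T₁) μ₁)
    (T₂ : Equiv.Perm X₂) (hT₂ : Measurable (⇑T₂)) (hT₂symm : Measurable (⇑T₂.symm))
    (hT₂erg : Ergodic (⇑T₂) μ₂)
    (φ : X₁ → X₂) (hφ : MeasurePreserving φ μ₁ μ₂)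
    (ψ : X₂ → X₁) (hψ : MeasurePreserving ψ μ₂ μ₁)
    (hψφ : ∀ᵐ x ∂μ₁, ψ (φ x) = x) (hφψ : ∀ᵐ y ∂μ₂, φ (ψ y) = y)
    (hconj : ∀ᵐ x ∂μ₁, φ (T₁ x) = T₂ (φ x)) :
    {h : ℕ → ℝ | IsScalingEntropySeq μ₁ T₁ h} = {h : ℕ → ℝ | IsScalingEntropySeq μ₂ T₂ h} := by
  have hT₁p : MeasurePreserving ⇑T₁ μ₁ μ₁ := hT₁erg.toMeasurePreserving
  have hT₂p : MeasurePreserving ⇑T₂ μ₂ μ₂ := hT₂erg.toMeasurePreserving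
  have hψae : Filter.Tendsto ψ (ae μ₂) (ae μ₁) := hψ.quasiMeasurePreserving.tendsto_ae
  have hconj₂ : ∀ᵐ y ∂μ₂, ψ (T₂ y) = T₁ (ψ y) := by
    have h1 : ∀ᵐ y ∂μ₂, φ (T₁ (ψ y)) = T₂ (φ (ψ y)) := hψae.eventually hconj
    have h3 : ∀ᵐ y ∂μ₂, ψ (φ (T₁ (ψ y))) = T₁ (ψ y) :=
      ((hT₁p.comp hψ).quasiMeasurePreserving.tendsto_ae).eventually hψφ
    filter_upwards [h1, hφψ, h3] with y e1 e2 e3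
    rw [← e3, e1, e2]
  ext h
  simp only [Set.mem_setOf_eq]
  constructor
  · exact fun hh => transfer_scalingEntropySeq μ₁ μ₂ T₁ hT₁ hT₁symm hT₁p T₂ hT₂ hT₂symm hT₂p
      φ hφ ψ hψ hψφ hφψ hconj hconj₂ hh
  · exact fun hh => transfer_scalingEntropySeq μ₂ μ₁ T₂ hT₂ hT₂symm hT₂p T₁ hT₁ hT₁symm hT₁p
      ψ hψ φ hφ hφψ hψφ hconj₂ hconj hh
end
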